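/- Let B₁, B₂, B₃, C, D : ℝ³ × ℝ → ℝ be continuous functions and for each point p = (y,t,r) ∈ ℝ³ × ℝ × ℝ define the symmetric bilinear form g_p on ℝ³ × ℝ × ℝ by g_p( (ẏ,ṫ,ṙ), (ẏ',ṫ',ṙ') ) = ⟨ẏ,ẏ'⟩ + Σ_{k=1}^{3} B_k(y,t)·( ẏ_k·ṙ' + ṙ·ẏ'_k ) + C(y,t)·ṙ·ṙ' + D(y,t)·( ṫ·ṙ' + ṙ·ṫ' ). For v, w ∈ ℝ³ and t₀ ∈ ℝ define Φ_{v,w,t₀}(y,t,r) = ( y + (t+t₀)v + w, t + t₀, r − ⟨v,y⟩ − (t/2)‖v‖² ) and the linear map L_v(ẏ,ṫ,ṙ) = ( ẏ + ṫ·v, ṫ, ṙ − ⟨v,ẏ⟩ − (ṫ/2)‖v‖² ). Suppose that for all v, w ∈ ℝ³, t₀ ∈ ℝ, all points p and all vectors u, u': g_{Φ_{v,w,t₀}(p)}( L_v u, L_v u' ) = g_p( u, u' ). Then B_k ≡ 0 for k = 1,2,3, C ≡ 0, and D ≡ 1; that is, g is the Schrödinger metric Σ_k dy_k⊗dy_k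 + dt⊗dr + dr⊗dt, which is therefore the unique metric of this form, extending the standard spatial Euclidean metric, that is invariant under all changes of inertial frame. -/

import Mathlib

open scoped BigOperators

/-- The general `U(1)`-invariant (`r`-independent) metric extending the spatial
Euclidean metric:
`g_p(u,u') = ⟨ẏ,ẏ'⟩ + Σ_k B_k(y,t)(ẏ_kṙ' + ṙẏ'_k) + C(y,t)ṙṙ' + D(y,t)(ṫṙ' + ṙṫ')`. -/
noncomputable def gMetric (B : Fin 3 → (Fin 3 → ℝ) × ℝ → ℝ)
    (C D : (Fin 3 → ℝ) × ℝ → ℝ)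
    (p : (Fin 3 → ℝ) × ℝ × ℝ) (u u' : (Fin 3 → ℝ) × ℝ × ℝ) : ℝ :=
  (∑ k : Fin 3, u.1 k * u'.1 k)
    + (∑ k : Fin 3, B k (p.1, p.2.1) * (u.1 k * u'.2.2 + u.2.2 * u'.1 k))
    + C (p.1, p.2.1) * (u.2.2 * u'.2.2)
    + D (p.1, p.2.1) * (u.2.1 * u'.2.2 + u.2.2 * u'.2.1)

/-- The coordinate change `Φ_{v,w,t₀}(y,t,r) = (y + (t+t₀)v + w, t+t₀, r − ⟨v,y⟩ − (t/2)‖v‖²)`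
on the Schrödinger principal bundle associated with a change of inertial frame. -/
noncomputable def PhiMap (v w : Fin 3 → ℝ) (t0 : ℝ)
    (p : (Fin 3 → ℝ) × ℝ × ℝ) : (Fin 3 → ℝ) × ℝ × ℝ :=
  (p.1 + (p.2.1 + t0) • v + w, p.2.1 + t0,
    p.2.2 - (∑ k : Fin 3, v k * p.1 k) - (p.2.1 / 2) * ∑ k : Fin 3, v k * v k)

/-- The differential `L_v(ẏ,ṫ,ṙ) = (ẏ + ṫ·v, ṫ, ṙ − ⟨v,ẏ⟩ − (ṫ/2)‖v‖²)` of `Φ_{v,w,t₀}`. -/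
noncomputable def Lv (v : Fin 3 → ℝ) (u : (Fin 3 → ℝ) × ℝ × ℝ) : (Fin 3 → ℝ) × ℝ × ℝ :=
  (u.1 + u.2.1 • v, u.2.1,
    u.2.2 - (∑ k : Fin 3, v k * u.1 k) - (u.2.1 / 2) * ∑ k : Fin 3, v k * v k)

/-- Uniqueness of the Schrödinger metric: if the metric `g` (extending the standard
spatial Euclidean metric, with continuous coefficients `B_k`, `C`, `D`) is invariant
under all changes of inertial frame, then `B_k ≡ 0`, `C ≡ 0` and `D ≡ 1`, i.e. `g` is
the Schrödinger metric `Σ_k dy_k⊗dy_k + dt⊗dr + dr⊗dt`. -/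
theorem schrodinger_metric_unique
    (B : Fin 3 → (Fin 3 → ℝ) × ℝ → ℝ) (C D : (Fin 3 → ℝ) × ℝ → ℝ)
    (hB : ∀ k : Fin 3, Continuous (B k)) (hC : Continuous C) (hD : Continuous D)
    (hinv : ∀ (v w : Fin 3 → ℝ) (t0 : ℝ) (p : (Fin 3 → ℝ) × ℝ × ℝ)
      (u u' : (Fin 3 → ℝ) × ℝ × ℝ),
      gMetric B C D (PhiMap v w t0 p) (Lv v u) (Lv v u') = gMetric B C D p u u') :
    (∀ (k : Fin 3) (q : (Fin 3 → ℝ) × ℝ), B k q = 0)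
    ∧ (∀ q : (Fin 3 → ℝ) × ℝ, C q = 0)
    ∧ (∀ q : (Fin 3 → ℝ) × ℝ, D q = 1) := by
  -- Step 1: coefficients are constant (take v = 0).
  have hBc : ∀ (k : Fin 3) (q : (Fin 3 → ℝ) × ℝ), B k q = B k 0 := by
    intro k q
    have h := hinv 0 q.1 q.2 (0, (0, 0)) (Pi.single k 1, (0, 0)) (0, (0, 1))
    simp [gMetric, PhiMap, Lv, Fin.sum_univ_three, Pi.single_apply, Prod.mk_zero_zero] at h
    fin_cases k <;> simp_all
  have hCc : ∀ q : (Fin 3 → ℝ) × ℝ, C q = C 0 := by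
    intro q
    have h := hinv 0 q.1 q.2 (0, (0, 0)) (0, (0, 1)) (0, (0, 1))
    simpa [gMetric, PhiMap, Lv, Fin.sum_univ_three, Prod.mk_zero_zero] using h
  have hDc : ∀ q : (Fin 3 → ℝ) × ℝ, D q = D 0 := by
    intro q
    have h := hinv 0 q.1 q.2 (0, (0, 0)) (0, (1, 0)) (0, (0, 1))
    simpa [gMetric, PhiMap, Lv, Fin.sum_univ_three, Prod.mk_zero_zero] using h
  -- Step 2: key equation ∑ b_k v_k = c‖v‖²/2.
  have key : ∀ v : Fin 3 → ℝ,
      (∑ k : Fin 3, B k 0 * v k) = C 0 * ((1 / 2) * ∑ k : Fin 3, v k * v k) := by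
    intro v
    have h := hinv v 0 0 (0, (0, 0)) (0, (1, 0)) (0, (0, 1))
    simp only [gMetric, PhiMap, Lv] at h
    simp only [hBc, hCc, hDc] at h
    simp only [Fin.sum_univ_three] at h ⊢
    simp at h
    ring_nf at h ⊢
    linarith
  -- Extract C = 0 and B = 0.
  have hC0 : C 0 = 0 := by
    have h1 := key (Pi.single 0 1)
    have h2 := key (-(Pi.single 0 1))
    simp [Fin.sum_univ_three, Pi.single_apply] at h1 h2
    linarith
  have hB0 : ∀ k : Fin 3, B k 0 = 0 := by
    intro k
    have h1 := key (Pi.single k 1)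
    simp [Fin.sum_univ_three, Pi.single_apply, hC0] at h1
    fin_cases k <;> simp_all
  -- Step 3: D = 1.
  have hD1 : D 0 = 1 := by
    have h := hinv (Pi.single 0 1) 0 0 (0, (0, 0)) (0, (1, 0)) (0, (1, 0))
    simp only [gMetric, PhiMap, Lv] at h
    simp only [hBc, hCc, hDc, hC0] at h
    simp [Fin.sum_univ_three, Pi.single_apply, hB0] at h
    linarith
  exact ⟨fun k q => (hBc k q).trans (hB0 k),
    fun q => (hCc q).trans hC0,
    fun q => (hDc q).trans hD1⟩
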